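/- arXiv:2404.16204 — 3 statements merged into one kernel-verified Lean document; each statement's English description precedes it below -/
import Mathlib

section
/- (Pauli-x measurement at the center of a star graph, graph level.) Let W be a set of vertices, c ∈ W, let S be the star graph on W with center c, and let k ∈ W \ {c}. Then τ_k(τ_c(τ_k(S)) − c) is the star graph on W \ {c} with center k. -/
open SimpleGraph

universe u

/-- Local complementation of `G` at vertex `i`: adjacency is toggled exactly among
pairs of neighbors of `i`. -/
def localComp {V : Type u} (G : SimpleGraph V) (i : V) : SimpleGraph V where
  Adj a b := a ≠ b ∧
    ((G.Adj i a ∧ G.Adj i b) ∧ ¬ G.Adj a b ∨ ¬(G.Adj i a ∧ G.Adj i b) ∧ G.Adj a b)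
  symm := by
    constructor
    rintro a b ⟨hne, h⟩
    refine ⟨hne.symm, ?_⟩
    rcases h with ⟨⟨ha, hb⟩, hab⟩ | ⟨h1, h2⟩
    · exact Or.inl ⟨⟨hb, ha⟩, fun h => hab h.symm⟩
    · exact Or.inr ⟨fun h => h1 ⟨h.2, h.1⟩, h2.symm⟩
  loopless := ⟨fun a h => h.1 rfl⟩

/-- Vertex deletion `G − i`: remove every edge incident to `i` (the vertex stays,
isolated). -/
def delVert {V : Type u} (G : SimpleGraph V) (i : V) : SimpleGraph V where
  Adj a b := G.Adj a b ∧ a ≠ i ∧ b ≠ i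
  symm := ⟨fun _ _ ⟨h, ha, hb⟩ => ⟨h.symm, hb, ha⟩⟩
  loopless := ⟨fun a h => G.loopless.irrefl a h.1⟩

/-- Deletion of a set `Z` of vertices: remove every edge incident to a vertex of `Z`. -/
def delSet {V : Type u} (G : SimpleGraph V) (Z : Set V) : SimpleGraph V where
  Adj a b := G.Adj a b ∧ a ∉ Z ∧ b ∉ Z
  symm := ⟨fun _ _ ⟨h, ha, hb⟩ => ⟨h.symm, hb, ha⟩⟩
  loopless := ⟨fun a h => G.loopless.irrefl a h.1⟩

/-- Star graph on the set `W` with center `c`: edges are exactly the pairs `{c, u}`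
for `u ∈ W \ {c}`. -/
def starGraph {V : Type u} (W : Set V) (c : V) : SimpleGraph V :=
  SimpleGraph.fromRel (fun a b => a = c ∧ b ∈ W \ {c})

/-- Complete graph on the set `A`: edges are exactly all pairs of distinct elements
of `A`. -/
def completeOn {V : Type u} (A : Set V) : SimpleGraph V :=
  SimpleGraph.fromRel (fun a b => a ∈ A ∧ b ∈ A)

/-- Complete bipartite graph on parts `A` and `B`: edges are exactly the pairs
`{a, b}` with `a ∈ A` and `b ∈ B`. -/
def completeBipartiteOn {V : Type u} (A B : Set V) : SimpleGraph V :=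
  SimpleGraph.fromRel (fun a b => a ∈ A ∧ b ∈ B)

/-- Binary star graph `S(P1, P2, c1, c2)`: edges are exactly the pairs `{c1, u}`
with `u ∈ P2` together with the pairs `{u, c2}` with `u ∈ P1`. -/
def binaryStar {V : Type u} (P1 P2 : Set V) (c1 c2 : V) : SimpleGraph V :=
  SimpleGraph.fromRel (fun a b => (a = c1 ∧ b ∈ P2) ∨ (a ∈ P1 ∧ b = c2))

/-- The graph with the single edge `{c1, c2}`. -/
def singleEdge {V : Type u} (c1 c2 : V) : SimpleGraph V :=
  SimpleGraph.fromRel (fun a b => a = c1 ∧ b = c2)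

lemma localComp_adj {V : Type u} (G : SimpleGraph V) (i a b : V) :
    (localComp G i).Adj a b ↔ a ≠ b ∧
    ((G.Adj i a ∧ G.Adj i b) ∧ ¬ G.Adj a b ∨ ¬(G.Adj i a ∧ G.Adj i b) ∧ G.Adj a b) :=
  Iff.rfl

lemma delVert_adj {V : Type u} (G : SimpleGraph V) (i a b : V) :
    (delVert G i).Adj a b ↔ G.Adj a b ∧ a ≠ i ∧ b ≠ i := Iff.rfl

lemma starGraph_adj {V : Type u} (W : Set V) (c a b : V) :
    (starGraph W c).Adj a b ↔ a ≠ b ∧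
      ((a = c ∧ b ∈ W \ {c}) ∨ (b = c ∧ a ∈ W \ {c})) := by
  simp [_root_.starGraph, SimpleGraph.fromRel_adj]

lemma completeOn_adj {V : Type u} (A : Set V) (a b : V) :
    (completeOn A).Adj a b ↔ a ≠ b ∧ a ∈ A ∧ b ∈ A := by
  simp only [completeOn, SimpleGraph.fromRel_adj]
  tauto

lemma lc_star_noncenter {V : Type u} (W : Set V) (c k : V) (hkc : k ≠ c) :
    localComp (starGraph W c) k = starGraph W c := by
  ext a b
  simp only [localComp_adj, _root_.starGraph_adj, Set.mem_diff, Set.mem_singleton_iff]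
  by_cases hac : a = c <;> by_cases hbc : b = c <;> subst_vars <;> tauto

lemma lc_star_center {V : Type u} (W : Set V) (c : V) (hc : c ∈ W) :
    localComp (starGraph W c) c = completeOn W := by
  ext a b
  simp only [localComp_adj, _root_.starGraph_adj, completeOn_adj, Set.mem_diff,
    Set.mem_singleton_iff]
  by_cases hac : a = c <;> by_cases hbc : b = c <;> subst_vars <;>
    first | tauto | (constructor <;> rintro ⟨h1, h2⟩ <;> exact ⟨h1, by tauto⟩)

lemma del_completeOn {V : Type u} (W : Set V) (c : V) :
    delVert (completeOn W) c = completeOn (W \ {c}) := by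
  ext a b
  simp only [delVert_adj, completeOn_adj, Set.mem_diff, Set.mem_singleton_iff]
  tauto

lemma lc_completeOn {V : Type u} (A : Set V) (k : V) (hk : k ∈ A) :
    localComp (completeOn A) k = starGraph A k := by
  ext a b
  simp only [localComp_adj, completeOn_adj, _root_.starGraph_adj, Set.mem_diff,
    Set.mem_singleton_iff]
  by_cases hak : a = k <;> by_cases hbk : b = k <;> subst_vars <;>
    first | tauto | (constructor <;> rintro ⟨h1, h2⟩ <;> exact ⟨h1, by tauto⟩)

/-- Pauli-x measurement at the center of a star graph, graph level:
`τ_k(τ_c(τ_k(S)) − c)` is the star graph on `W \ {c}` with center `k`. -/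
theorem stmt_4 {V : Type u} (W : Set V) (c : V) (hc : c ∈ W)
    (k : V) (hk : k ∈ W \ {c}) :
    localComp (delVert (localComp (localComp (starGraph W c) k) c) c) k =
      starGraph (W \ {c}) k := by
  obtain ⟨hkW, hkc⟩ := hk
  rw [lc_star_noncenter W c k hkc, lc_star_center W c hc, del_completeOn,
    lc_completeOn (W \ {c}) k (Set.mem_diff_singleton.mpr ⟨hkW, hkc⟩)]
end

section
/- Let P1 and P2 be disjoint sets of vertices with c1 ∈ P1 and c2 ∈ P2, let S = S(P1, P2, c1, c2) be the binary star graph, and let w ∈ P2 \ {c2}. Let G' = S − (P2 \ {c2, w}) be obtained by deleting all vertices of P2 other than c2 and w. Then τ_{c1}(G') − c1 is the star graph on (P1 \ {c1}) ∪ {c2, w} with center c2. -/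
open SimpleGraph

universe u

/-- with `G' = S − (P2 \ {c2, w})`, `τ_{c1}(G') − c1` is the star graph
on `(P1 \ {c1}) ∪ {c2, w}` with center `c2`. -/
theorem stmt_9 {V : Type u} (P1 P2 : Set V) (hdisj : Disjoint P1 P2)
    (c1 c2 : V) (hc1 : c1 ∈ P1) (hc2 : c2 ∈ P2) (w : V) (hw : w ∈ P2 \ {c2}) :
    delVert (localComp (delSet (binaryStar P1 P2 c1 c2) (P2 \ {c2, w})) c1) c1 =
      starGraph ((P1 \ {c1}) ∪ {c2, w}) c2 := by
  have h12 : ∀ x, x ∈ P1 → x ∉ P2 := fun x hx hx2 => (Set.disjoint_left.mp hdisj hx) hx2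
  have hne : c1 ≠ c2 := fun h => h12 c1 hc1 (h ▸ hc2)
  have hwP2 : w ∈ P2 := hw.1
  have hwne : w ≠ c2 := hw.2
  have hwc1 : w ≠ c1 := fun h => h12 w (h ▸ hc1) hwP2
  have hc1P2 : c1 ∉ P2 := h12 c1 hc1
  have hc1w : c1 ≠ w := fun h => hwc1 h.symm
  ext a b
  have ha := h12 a
  have hb := h12 b
  have ea2 : a = c2 → a ∈ P2 := fun h => h ▸ hc2
  have eb2 : b = c2 → b ∈ P2 := fun h => h ▸ hc2
  have eaw : a = w → a ∈ P2 := fun h => h ▸ hwP2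
  have ebw : b = w → b ∈ P2 := fun h => h ▸ hwP2
  have ea1 : a = c1 → a ∈ P1 := fun h => h ▸ hc1
  have eb1 : b = c1 → b ∈ P1 := fun h => h ▸ hc1
  have sa : a = c1 ↔ c1 = a := eq_comm
  have sb : b = c1 ↔ c1 = b := eq_comm
  have hab2 : a = c2 → b = c2 → a = b := fun h h' => h.trans h'.symm
  have habw : a = w → b = w → a = b := fun h h' => h.trans h'.symm
  have hacw : a = c2 → a = w → False := fun h h' => hwne (h'.symm.trans h)
  have hbcw : b = c2 → b = w → False := fun h h' => hwne (h'.symm.trans h)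
  have hac2c1 : a = c2 → a ≠ c1 := fun h h' => hne (h'.symm.trans h)
  simp only [delVert, localComp, delSet, binaryStar, _root_.starGraph,
    SimpleGraph.fromRel_adj, Set.mem_diff, Set.mem_union, Set.mem_insert_iff,
    Set.mem_singleton_iff, hc1P2, hne, hc1w, hc1, true_and, and_true, false_and, and_false,
    false_or, or_false, not_false_eq_true]
  constructor
  · rintro ⟨⟨hab, hcase⟩, hac1, hbc1⟩
    refine ⟨hab, ?_⟩
    rcases hcase with ⟨⟨⟨⟨_, haP⟩, haF⟩, ⟨_, hbP⟩, hbF⟩, -⟩ | ⟨-, ⟨_, hrel⟩, -, -⟩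
    · have haCW : a = c2 ∨ a = w := by
        rcases haP with h | h
        · by_contra hc; exact haF ⟨h, hc⟩
        · exact Or.inl h
      have hbCW : b = c2 ∨ b = w := by
        rcases hbP with h | h
        · by_contra hc; exact hbF ⟨h, hc⟩
        · exact Or.inl h
      rcases haCW with h1 | h1 <;> rcases hbCW with h2 | h2
      · exact absurd (hab2 h1 h2) hab
      · exact Or.inl ⟨h1, Or.inr (Or.inr h2), fun h3 => hbcw h3 h2⟩
      · exact Or.inr ⟨h2, Or.inr (Or.inr h1), fun h3 => hacw h3 h1⟩
      · exact absurd (habw h1 h2) hab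
    · rcases hrel with (⟨h1, _⟩ | ⟨h1, h2⟩) | (⟨h1, _⟩ | ⟨h1, h2⟩)
      · exact absurd h1 hac1
      · exact Or.inr ⟨h2, Or.inl ⟨h1, hac1⟩, fun h3 => ha h1 (ea2 h3)⟩
      · exact absurd h1 hbc1
      · exact Or.inl ⟨h2, Or.inl ⟨h1, hbc1⟩, fun h3 => hb h1 (eb2 h3)⟩
  · rintro ⟨hab, ⟨ha2, hbmem, hb2⟩ | ⟨hb2, hamem, ha2⟩⟩
    · have Na : (c1 ≠ a ∧ (a ∈ P2 ∨ a = c2)) ∧ ¬(a ∈ P2 ∧ ¬(a = c2 ∨ a = w)) :=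
        ⟨⟨fun h => hne (h.trans ha2), Or.inr ha2⟩, fun h => h.2 (Or.inl ha2)⟩
      rcases hbmem with ⟨hbP1, hbc1⟩ | hbw | hbw
      · have nN : ¬(((c1 ≠ a ∧ (a ∈ P2 ∨ a = c2)) ∧ ¬(a ∈ P2 ∧ ¬(a = c2 ∨ a = w))) ∧
            (c1 ≠ b ∧ (b ∈ P2 ∨ b = c2)) ∧ ¬(b ∈ P2 ∧ ¬(b = c2 ∨ b = w))) := by
          rintro ⟨-, ⟨-, hbP⟩, -⟩
          rcases hbP with h | h
          · exact hb hbP1 h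
          · exact hb2 h
        exact ⟨⟨hab, Or.inr ⟨nN, ⟨hab, Or.inr (Or.inr ⟨hbP1, ha2⟩)⟩,
          fun h => h.2 (Or.inl ha2), fun h => hb hbP1 h.1⟩⟩, hac2c1 ha2, hbc1⟩
      · exact absurd hbw hb2
      · have Nb : (c1 ≠ b ∧ (b ∈ P2 ∨ b = c2)) ∧ ¬(b ∈ P2 ∧ ¬(b = c2 ∨ b = w)) :=
          ⟨⟨fun h => hc1w (h.trans hbw), Or.inl (ebw hbw)⟩, fun h => h.2 (Or.inr hbw)⟩
        have nAB : ¬((a ≠ b ∧ ((a = c1 ∧ b ∈ P2 ∨ a ∈ P1 ∧ b = c2) ∨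
            b = c1 ∧ a ∈ P2 ∨ b ∈ P1 ∧ a = c2)) ∧
            ¬(a ∈ P2 ∧ ¬(a = c2 ∨ a = w)) ∧ ¬(b ∈ P2 ∧ ¬(b = c2 ∨ b = w))) := by
          rintro ⟨⟨-, hrel⟩, -⟩
          rcases hrel with (⟨h1, -⟩ | ⟨h1, -⟩) | (⟨h1, -⟩ | ⟨h1, -⟩)
          · exact hac2c1 ha2 h1
          · exact ha h1 (ea2 ha2)
          · exact hwc1 (hbw.symm.trans h1)
          · exact hb h1 (ebw hbw)
        exact ⟨⟨hab, Or.inl ⟨⟨Na, Nb⟩, nAB⟩⟩, hac2c1 ha2,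
          fun h => hwc1 (hbw.symm.trans h)⟩
    · have Nb : (c1 ≠ b ∧ (b ∈ P2 ∨ b = c2)) ∧ ¬(b ∈ P2 ∧ ¬(b = c2 ∨ b = w)) :=
        ⟨⟨fun h => hne (h.trans hb2), Or.inr hb2⟩, fun h => h.2 (Or.inl hb2)⟩
      rcases hamem with ⟨haP1, hac1⟩ | haw | haw
      · have nN : ¬(((c1 ≠ a ∧ (a ∈ P2 ∨ a = c2)) ∧ ¬(a ∈ P2 ∧ ¬(a = c2 ∨ a = w))) ∧
            (c1 ≠ b ∧ (b ∈ P2 ∨ b = c2)) ∧ ¬(b ∈ P2 ∧ ¬(b = c2 ∨ b = w))) := by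
          rintro ⟨⟨⟨-, haP⟩, -⟩, -⟩
          rcases haP with h | h
          · exact ha haP1 h
          · exact ha2 h
        exact ⟨⟨hab, Or.inr ⟨nN, ⟨hab, Or.inl (Or.inr ⟨haP1, hb2⟩)⟩,
          fun h => ha haP1 h.1, fun h => h.2 (Or.inl hb2)⟩⟩, hac1,
          fun h => hne (h.symm.trans hb2)⟩
      · exact absurd haw ha2
      · have Na : (c1 ≠ a ∧ (a ∈ P2 ∨ a = c2)) ∧ ¬(a ∈ P2 ∧ ¬(a = c2 ∨ a = w)) :=
          ⟨⟨fun h => hc1w (h.trans haw), Or.inl (eaw haw)⟩, fun h => h.2 (Or.inr haw)⟩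
        have nAB : ¬((a ≠ b ∧ ((a = c1 ∧ b ∈ P2 ∨ a ∈ P1 ∧ b = c2) ∨
            b = c1 ∧ a ∈ P2 ∨ b ∈ P1 ∧ a = c2)) ∧
            ¬(a ∈ P2 ∧ ¬(a = c2 ∨ a = w)) ∧ ¬(b ∈ P2 ∧ ¬(b = c2 ∨ b = w))) := by
          rintro ⟨⟨-, hrel⟩, -⟩
          rcases hrel with (⟨h1, -⟩ | ⟨h1, -⟩) | (⟨h1, -⟩ | ⟨h1, -⟩)
          · exact hwc1 (haw.symm.trans h1)
          · exact ha h1 (eaw haw)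
          · exact hne (h1.symm.trans hb2)
          · exact hb h1 (eb2 hb2)
        exact ⟨⟨hab, Or.inl ⟨⟨Na, Nb⟩, nAB⟩⟩, fun h => hwc1 (haw.symm.trans h),
          fun h => hne (h.symm.trans hb2)⟩
end

section
/- Let P1 and P2 be disjoint sets of vertices with c1 ∈ P1 and c2 ∈ P2, and let S = S(P1, P2, c1, c2) be the binary star graph. Then τ_{c2}(τ_{c1}(τ_{c2}(S)) − c1) is the simple graph whose edges are exactly: the pairs {c2, z} with z ∈ P2 \ {c2}, together with all pairs {u, z} with u ∈ P1 \ {c1} and z ∈ P2 \ {c2}. -/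
open SimpleGraph

universe u

set_option maxHeartbeats 4000000 in
/-- `τ_{c2}(τ_{c1}(τ_{c2}(S)) − c1)` is the simple graph whose edges
are exactly: the pairs `{c2, z}` with `z ∈ P2 \ {c2}`, together with all pairs
`{u, z}` with `u ∈ P1 \ {c1}` and `z ∈ P2 \ {c2}`. -/
theorem stmt_15 {V : Type u} (P1 P2 : Set V) (hdisj : Disjoint P1 P2)
    (c1 c2 : V) (hc1 : c1 ∈ P1) (hc2 : c2 ∈ P2) :
    localComp (delVert (localComp (localComp (binaryStar P1 P2 c1 c2) c2) c1) c1) c2 =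
      SimpleGraph.fromRel (fun a b =>
        (a = c2 ∧ b ∈ P2 \ {c2}) ∨ (a ∈ P1 \ {c1} ∧ b ∈ P2 \ {c2})) := by
  have h12 : ∀ x, x ∈ P1 → x ∉ P2 := fun x hx => Set.disjoint_left.mp hdisj hx
  have hne : c1 ≠ c2 := fun h => h12 c1 hc1 (h ▸ hc2)
  have hc1n2 : c1 ∉ P2 := h12 c1 hc1
  have hc2n1 : c2 ∉ P1 := fun h => h12 c2 h hc2
  clear hdisj
  set S := binaryStar P1 P2 c1 c2 with hSdef
  have hS : ∀ a b, S.Adj a b ↔ a ≠ b ∧ ((a = c1 ∧ b ∈ P2) ∨ (a ∈ P1 ∧ b = c2) ∨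
      (b = c1 ∧ a ∈ P2) ∨ (b ∈ P1 ∧ a = c2)) := by
    intro a b
    simp only [hSdef, binaryStar, SimpleGraph.fromRel_adj]
    tauto
  have h1 : ∀ a b, (localComp S c2).Adj a b ↔ a ≠ b ∧ ((a = c1 ∧ b ∈ P2) ∨ (a ∈ P1 ∧ b = c2) ∨
      (b = c1 ∧ a ∈ P2) ∨ (b ∈ P1 ∧ a = c2) ∨ (a ∈ P1 ∧ b ∈ P1)) := by
    intro a b
    rw [localComp_adj]
    simp only [hS]
    clear_value S
    clear hS hSdef S
    constructor
    · rintro ⟨hab, h⟩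
      refine ⟨hab, ?_⟩
      by_cases ha1 : a ∈ P1 <;> by_cases hb1 : b ∈ P1 <;> by_cases hac1 : a = c1 <;>
        by_cases hbc1 : b = c1 <;> simp_all <;> tauto
    · rintro ⟨hab, h⟩
      refine ⟨hab, ?_⟩
      by_cases ha1 : a ∈ P1 <;> by_cases hb1 : b ∈ P1 <;> by_cases hac1 : a = c1 <;>
        by_cases hbc1 : b = c1 <;> by_cases ha2 : a ∈ P2 <;> by_cases hb2 : b ∈ P2 <;>
        simp_all <;> tauto
  have h2 : ∀ a b, (localComp (localComp S c2) c1).Adj a b ↔ a ≠ b ∧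
      ((a = c1 ∧ (b ∈ P1 ∨ b ∈ P2)) ∨ (b = c1 ∧ (a ∈ P1 ∨ a ∈ P2)) ∨
       (a ∈ P2 ∧ b ∈ P2) ∨ (a ∈ P1 ∧ a ≠ c1 ∧ b ∈ P2 ∧ b ≠ c2) ∨
       (b ∈ P1 ∧ b ≠ c1 ∧ a ∈ P2 ∧ a ≠ c2)) := by
    intro a b
    rw [localComp_adj]
    simp only [h1]
    clear_value S
    clear h1 hS hSdef S
    constructor
    · rintro ⟨hab, h⟩
      refine ⟨hab, ?_⟩
      by_cases ha1 : a ∈ P1 <;> by_cases hb1 : b ∈ P1 <;> by_cases hac1 : a = c1 <;>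
        by_cases hbc1 : b = c1 <;> by_cases ha2 : a ∈ P2 <;> by_cases hb2 : b ∈ P2 <;>
        by_cases hac2 : a = c2 <;> by_cases hbc2 : b = c2 <;>
        simp_all <;> tauto
    · rintro ⟨hab, h⟩
      refine ⟨hab, ?_⟩
      by_cases ha1 : a ∈ P1 <;> by_cases hb1 : b ∈ P1 <;> by_cases hac1 : a = c1 <;>
        by_cases hbc1 : b = c1 <;> by_cases ha2 : a ∈ P2 <;> by_cases hb2 : b ∈ P2 <;>
        by_cases hac2 : a = c2 <;> by_cases hbc2 : b = c2 <;>
        simp_all <;> tauto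
  have h3 : ∀ a b, (delVert (localComp (localComp S c2) c1) c1).Adj a b ↔ a ≠ b ∧
      a ≠ c1 ∧ b ≠ c1 ∧ ((a ∈ P2 ∧ b ∈ P2) ∨ (a ∈ P1 ∧ b ∈ P2 ∧ b ≠ c2) ∨
      (b ∈ P1 ∧ a ∈ P2 ∧ a ≠ c2)) := by
    intro a b
    rw [delVert_adj]
    simp only [h2]
    clear_value S
    clear h2 h1 hS hSdef S
    tauto
  ext a b
  rw [localComp_adj]
  simp only [h3, SimpleGraph.fromRel_adj, Set.mem_diff, Set.mem_singleton_iff]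
  clear_value S
  clear h3 h2 h1 hS hSdef S
  constructor
  · rintro ⟨hab, h⟩
    refine ⟨hab, ?_⟩
    by_cases ha1 : a ∈ P1 <;> by_cases hb1 : b ∈ P1 <;> by_cases hac1 : a = c1 <;>
      by_cases hbc1 : b = c1 <;> by_cases ha2 : a ∈ P2 <;> by_cases hb2 : b ∈ P2 <;>
      by_cases hac2 : a = c2 <;> by_cases hbc2 : b = c2 <;>
      simp_all <;> tauto
  · rintro ⟨hab, h⟩
    refine ⟨hab, ?_⟩
    by_cases ha1 : a ∈ P1 <;> by_cases hb1 : b ∈ P1 <;> by_cases hac1 : a = c1 <;>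
      by_cases hbc1 : b = c1 <;> by_cases ha2 : a ∈ P2 <;> by_cases hb2 : b ∈ P2 <;>
      by_cases hac2 : a = c2 <;> by_cases hbc2 : b = c2 <;>
      simp_all <;> tauto
end
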